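/- Proposition 2 with the empirical deviation s (one-dimensional precise form of Eq. (11)). Let G ⊆ ℝ be a convex set, μ₀ a point in the interior of G, and d₀ = infDist(μ₀, frontier G) the distance from μ₀ to the topological boundary of G. Let σ₀ > 0, and let L, C, s be positive real numbers satisfying s² > C·σ₀²/L (so that σ₀ < s·√(L/C)). If r is distributed according to the Gaussian measure on ℝ with mean μ₀ and variance σ₀², then Pr(r ∈ interior G) ≥ erf(d₀·√C/(s·√(2L))); that is, (gaussianReal μ₀ σ₀²)(interior G) ≥ erf(d₀·√C/(s·√(2L))). -/

import Mathlib

open MeasureTheory ProbabilityTheory Real Metric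

/-- The Gaussian error function `erf x = (2/√π) ∫₀ˣ exp (−t²) dt`. -/
noncomputable def erf (x : ℝ) : ℝ := (2 / Real.sqrt Real.pi) * ∫ t in (0:ℝ)..x, Real.exp (-t ^ 2)

/-- A ball around an interior point with radius at most the distance to the frontier stays in
the interior. -/
lemma ball_infDist_frontier_subset_interior {G : Set ℝ} {μ₀ : ℝ} (hμ₀ : μ₀ ∈ interior G) :
    Metric.ball μ₀ (Metric.infDist μ₀ (frontier G)) ⊆ interior G := by
  set v := Metric.ball μ₀ (Metric.infDist μ₀ (frontier G)) with hv
  intro x hx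
  have hdisj : Disjoint (frontier (interior G)) v := by
    refine Set.disjoint_of_subset frontier_interior_subset le_rfl ?_
    exact (Metric.disjoint_ball_infDist (s := frontier G)).symm
  have hclopen := isClopen_preimage_val isOpen_interior hdisj
  have hpre : IsPreconnected v := (convex_ball μ₀ _).isPreconnected
  haveI : PreconnectedSpace v := Subtype.preconnectedSpace hpre
  have hμv : μ₀ ∈ v := by
    have hpos : 0 < Metric.infDist μ₀ (frontier G) :=
      lt_of_le_of_lt dist_nonneg (Metric.mem_ball.mp hx)
    exact Metric.mem_ball_self hpos
  have huniv : (Subtype.val ⁻¹' interior G : Set v) = Set.univ :=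
    hclopen.eq_univ ⟨⟨μ₀, hμv⟩, hμ₀⟩
  exact (Set.eq_univ_iff_forall.mp huniv ⟨x, hx⟩ : _)

/-- The Gaussian integral over a symmetric interval around the mean equals an error function
value. -/
lemma integral_gaussianPDFReal_Ioo {σ : ℝ} (hσ : 0 < σ) (μ₀ : ℝ) {d : ℝ} (hd : 0 ≤ d) :
    ∫ x in Set.Ioo (μ₀ - d) (μ₀ + d), gaussianPDFReal μ₀ (σ ^ 2).toNNReal x
      = erf (d / (σ * Real.sqrt 2)) := by
  have hv : ((σ ^ 2).toNNReal : ℝ) = σ ^ 2 := Real.coe_toNNReal _ (sq_nonneg σ)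
  have hab : μ₀ - d ≤ μ₀ + d := by linarith
  have hsq2 : 0 < Real.sqrt 2 := Real.sqrt_pos.mpr (by norm_num)
  have hσ2 : σ * Real.sqrt 2 ≠ 0 := by positivity
  rw [← MeasureTheory.integral_Ioc_eq_integral_Ioo,
    ← intervalIntegral.integral_of_le hab]
  unfold gaussianPDFReal
  rw [intervalIntegral.integral_const_mul]
  push_cast [hv]
  have h1 : (∫ x in (μ₀ - d)..(μ₀ + d), rexp (-(x - μ₀) ^ 2 / (2 * σ ^ 2)))
      = ∫ x in (-d)..d, rexp (-x ^ 2 / (2 * σ ^ 2)) := by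
    rw [intervalIntegral.integral_comp_sub_right (fun x => rexp (-x ^ 2 / (2 * σ ^ 2))) μ₀]
    norm_num
  rw [h1]
  have h2 : (fun x : ℝ => rexp (-x ^ 2 / (2 * σ ^ 2)))
      = fun x : ℝ => rexp (-((x / (σ * Real.sqrt 2)) ^ 2)) := by
    funext x
    have hx : (x / (σ * Real.sqrt 2)) ^ 2 = x ^ 2 / (2 * σ ^ 2) := by
      rw [div_pow, mul_pow, Real.sq_sqrt (by norm_num : (0:ℝ) ≤ 2)]
      ring_nf
    rw [hx, neg_div]
  rw [h2]
  rw [intervalIntegral.integral_comp_div (fun x => rexp (-(x ^ 2))) hσ2]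
  set b := d / (σ * Real.sqrt 2) with hb
  have hbnn : 0 ≤ b := by positivity
  have hsym : (∫ x in (-d/(σ * Real.sqrt 2))..b, rexp (-(x ^ 2)))
      = 2 * ∫ x in (0:ℝ)..b, rexp (-(x ^ 2)) := by
    have hneg : -d / (σ * Real.sqrt 2) = -b := by rw [hb]; ring
    rw [hneg]
    have hint : ∀ u v : ℝ, IntervalIntegrable (fun x => rexp (-(x ^ 2))) volume u v :=
      fun u v => (Real.continuous_exp.comp (by continuity)).intervalIntegrable u v
    have hsplit := intervalIntegral.integral_add_adjacent_intervals
      (hint (-b) 0) (hint 0 b)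
    rw [← hsplit]
    have hleft : (∫ x in (-b)..(0:ℝ), rexp (-(x ^ 2)))
        = ∫ x in (0:ℝ)..b, rexp (-(x ^ 2)) := by
      have h := intervalIntegral.integral_comp_neg (a := (0:ℝ)) (b := b)
        (f := fun x => rexp (-(x ^ 2)))
      simpa using h.symm
    rw [hleft]; ring
  rw [hsym]
  have hconst : (Real.sqrt (2 * π * σ ^ 2))⁻¹ = (σ * Real.sqrt 2 * Real.sqrt π)⁻¹ := by
    congr 1
    rw [show 2 * π * σ ^ 2 = σ ^ 2 * (2 * π) by ring, Real.sqrt_mul (sq_nonneg σ),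
      Real.sqrt_sq hσ.le, Real.sqrt_mul (by norm_num : (0:ℝ) ≤ 2)]
    ring
  rw [hconst, erf, smul_eq_mul]
  have hπ : Real.sqrt π ≠ 0 := by positivity
  set I := ∫ x in (0:ℝ)..b, rexp (-(x ^ 2))
  rw [mul_inv]
  have : (σ * Real.sqrt 2)⁻¹ * (Real.sqrt π)⁻¹ * (σ * Real.sqrt 2 * (2 * I))
      = 2 / Real.sqrt π * I := by
    field_simp
  rw [this]

/-- `erf` is monotone on the nonnegative reals. -/
lemma erf_mono_of_nonneg {a b : ℝ} (ha : 0 ≤ a) (hab : a ≤ b) : erf a ≤ erf b := by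
  unfold erf
  have hint : ∀ u v : ℝ, IntervalIntegrable (fun x => rexp (-x ^ 2)) volume u v :=
    fun u v => (Real.continuous_exp.comp (by continuity)).intervalIntegrable u v
  have hmono : (∫ t in (0:ℝ)..a, rexp (-t ^ 2)) ≤ ∫ t in (0:ℝ)..b, rexp (-t ^ 2) := by
    refine intervalIntegral.integral_mono_interval le_rfl ha hab ?_ (hint 0 b)
    exact Filter.Eventually.of_forall fun x => (Real.exp_pos _).le
  have h2 : (0:ℝ) ≤ 2 / Real.sqrt π := by positivity
  exact mul_le_mul_of_nonneg_left hmono h2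

/-- Proposition 2 with the empirical deviation `s` (Eq. (11), one-dimensional form): if
`s² > C σ₀² / L`, then a Gaussian sample with mean `μ₀ ∈ interior G` and variance `σ₀²` lands
in the interior of the convex set `G` with probability at least `erf (d₀ √C / (s √(2L)))`. -/
theorem gaussian_interior_prob_ge_erf_of_empirical_deviation
    {G : Set ℝ} (hG : Convex ℝ G) {μ₀ : ℝ} (hμ₀ : μ₀ ∈ interior G)
    {σ₀ L C s : ℝ} (hσ₀ : 0 < σ₀) (hL : 0 < L) (hC : 0 < C) (hs : 0 < s)
    (hdev : s ^ 2 > C * σ₀ ^ 2 / L) :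
    ENNReal.ofReal
        (erf (Metric.infDist μ₀ (frontier G) * Real.sqrt C / (s * Real.sqrt (2 * L)))) ≤
      (gaussianReal μ₀ (σ₀ ^ 2).toNNReal) (interior G) := by
  set d₀ := Metric.infDist μ₀ (frontier G) with hd₀
  have hd₀nn : 0 ≤ d₀ := Metric.infDist_nonneg
  set a := d₀ * Real.sqrt C / (s * Real.sqrt (2 * L)) with ha
  set b := d₀ / (σ₀ * Real.sqrt 2) with hb
  have hann : 0 ≤ a := by positivity
  -- a ≤ b
  have hab : a ≤ b := by
    have hkey : Real.sqrt C * σ₀ ≤ Real.sqrt L * s := by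
      have h1 : C * σ₀ ^ 2 ≤ L * s ^ 2 := by
        have := (div_lt_iff₀ hL).mp hdev
        nlinarith
      have h2 := Real.sqrt_le_sqrt h1
      rwa [Real.sqrt_mul hC.le, Real.sqrt_mul hL.le, Real.sqrt_sq hσ₀.le,
        Real.sqrt_sq hs.le] at h2
    have h2L : Real.sqrt (2 * L) = Real.sqrt 2 * Real.sqrt L :=
      Real.sqrt_mul (by norm_num) L
    rw [ha, hb, div_le_div_iff₀ (by positivity) (by positivity)]
    rw [h2L]
    have hσ2 : 0 < Real.sqrt 2 := Real.sqrt_pos.mpr (by norm_num)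
    nlinarith [mul_le_mul_of_nonneg_right hkey hσ2.le, mul_le_mul_of_nonneg_left
      (mul_le_mul_of_nonneg_right hkey hσ2.le) hd₀nn]
  have herf : erf a ≤ erf b := erf_mono_of_nonneg hann hab
  -- gaussian measure bound
  have hvne : ((σ₀ ^ 2).toNNReal : NNReal) ≠ 0 := by
    simp only [ne_eq, Real.toNNReal_eq_zero, not_le]
    positivity
  rw [gaussianReal_apply_eq_integral μ₀ hvne (interior G)]
  refine (ENNReal.ofReal_le_ofReal (le_trans herf ?_))
  rw [← integral_gaussianPDFReal_Ioo hσ₀ μ₀ hd₀nn]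
  refine setIntegral_mono_set ((integrable_gaussianPDFReal μ₀ _).integrableOn) ?_ ?_
  · exact Filter.Eventually.of_forall fun x => gaussianPDFReal_nonneg _ _ _
  · refine Filter.Eventually.of_forall ?_
    rw [← Real.ball_eq_Ioo]
    exact ball_infDist_frontier_subset_interior hμ₀
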